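/- Fix positive integers d and n. Let b(t) = ∑_{i=0}^{d+1} b_i t^i be a polynomial with integer coefficients of degree at most d+1 satisfying b(t) = t^{d+1} b(1/t), i.e. b_i = b_{d+1−i} for 0 ≤ i ≤ d+1. Then the polynomial b̃(t) := E_n( b(t) · (1 + t + ⋯ + t^{n−1})^{d+1} ) has degree at most d+1 and satisfies b̃(t) = t^{d+1} b̃(1/t), i.e. its coefficients satisfy b̃_i = b̃_{d+1−i} for 0 ≤ i ≤ d+1. -/

import Mathlib

open Polynomial

/-- The polynomial `1 + t + ⋯ + t^{n-1}`. -/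
noncomputable def geomPoly (n : ℕ) : Polynomial ℤ :=
  ∑ j ∈ Finset.range n, X ^ j

/-- The operator `E_n`: discards terms whose exponent is not divisible by `n` and divides
each remaining exponent by `n`, i.e. `(E_n p).coeff k = p.coeff (n * k)`. -/
noncomputable def Eop (n : ℕ) (p : Polynomial ℤ) : Polynomial ℤ :=
  ∑ k ∈ Finset.range (p.natDegree + 1), C (p.coeff (n * k)) * X ^ k

lemma geomPoly_coeff (n j : ℕ) : (geomPoly n).coeff j = if j < n then 1 else 0 := by
  simp [geomPoly, Polynomial.finset_sum_coeff, Polynomial.coeff_X_pow, Finset.sum_ite_eq',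
    Finset.mem_range, eq_comm]

lemma geomPoly_natDegree_le (n : ℕ) (hn : 0 < n) : (geomPoly n).natDegree ≤ n - 1 := by
  rw [Polynomial.natDegree_le_iff_coeff_eq_zero]
  intro N hN
  rw [geomPoly_coeff]
  have : ¬ N < n := by omega
  simp [this]

lemma geomPoly_reflect (n : ℕ) (hn : 0 < n) :
    Polynomial.reflect (n - 1) (geomPoly n) = geomPoly n := by
  ext i
  rw [Polynomial.coeff_reflect, geomPoly_coeff, geomPoly_coeff]
  by_cases h : i ≤ n - 1
  · rw [Polynomial.revAt_le h]
    have h1 : n - 1 - i < n := by omega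
    have h2 : i < n := by omega
    simp [h1, h2]
  · rw [Polynomial.revAt_eq_self_of_lt (by omega)]

lemma Eop_coeff (n : ℕ) (hn : 0 < n) (p : Polynomial ℤ) (i : ℕ) :
    (Eop n p).coeff i = p.coeff (n * i) := by
  rw [Eop, Polynomial.finset_sum_coeff]
  simp only [Polynomial.coeff_C_mul, Polynomial.coeff_X_pow, mul_ite, mul_one, mul_zero]
  rw [Finset.sum_ite_eq (Finset.range (p.natDegree + 1)) i (fun k => p.coeff (n * k))]
  by_cases h : i ∈ Finset.range (p.natDegree + 1)
  · simp [h]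
  · simp only [h, if_false]
    rw [Finset.mem_range] at h
    symm
    apply Polynomial.coeff_eq_zero_of_natDegree_lt
    calc p.natDegree < i := by omega
      _ ≤ n * i := Nat.le_mul_of_pos_left i hn

lemma geomPoly_pow_reflect (n : ℕ) (hn : 0 < n) (m : ℕ) :
    Polynomial.reflect ((n - 1) * m) (geomPoly n ^ m) = geomPoly n ^ m := by
  induction m with
  | zero =>
    ext i
    rw [pow_zero, Polynomial.coeff_reflect, Nat.mul_zero]
    rcases Nat.eq_zero_or_pos i with h | h
    · subst h; rw [Polynomial.revAt_zero]
    · rw [Polynomial.revAt_eq_self_of_lt h]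
  | succ k ih =>
    have h : (n - 1) * (k + 1) = (n - 1) * k + (n - 1) := by ring
    rw [h, pow_succ,
      Polynomial.reflect_mul _ _
        (le_trans Polynomial.natDegree_pow_le
          (by rw [Nat.mul_comm]; exact Nat.mul_le_mul_right k (geomPoly_natDegree_le n hn)))
        (geomPoly_natDegree_le n hn),
      ih, geomPoly_reflect n hn]

lemma split_eq (n d : ℕ) (hn : 0 < n) : (d + 1) + (n - 1) * (d + 1) = n * (d + 1) := by
  cases n with
  | zero => omega
  | succ m => simp [Nat.succ_sub_one]; ring

theorem stmt15 (d n : ℕ) (hd : 0 < d) (hn : 0 < n)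
    (b : Polynomial ℤ) (hbdeg : b.natDegree ≤ d + 1)
    (hbsym : ∀ i ≤ d + 1, b.coeff i = b.coeff (d + 1 - i)) :
    (Eop n (b * geomPoly n ^ (d + 1))).natDegree ≤ d + 1 ∧
    ∀ i ≤ d + 1,
      (Eop n (b * geomPoly n ^ (d + 1))).coeff i =
        (Eop n (b * geomPoly n ^ (d + 1))).coeff (d + 1 - i) := by
  set p := b * geomPoly n ^ (d + 1) with hp
  have hgdeg : (geomPoly n ^ (d + 1)).natDegree ≤ (n - 1) * (d + 1) := by
    calc (geomPoly n ^ (d + 1)).natDegree ≤ (d + 1) * (geomPoly n).natDegree :=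
          Polynomial.natDegree_pow_le
      _ ≤ (d + 1) * (n - 1) := Nat.mul_le_mul_left _ (geomPoly_natDegree_le n hn)
      _ = (n - 1) * (d + 1) := Nat.mul_comm _ _
  have hpdeg : p.natDegree ≤ n * (d + 1) := by
    calc p.natDegree ≤ b.natDegree + (geomPoly n ^ (d + 1)).natDegree :=
          Polynomial.natDegree_mul_le
      _ ≤ (d + 1) + (n - 1) * (d + 1) := Nat.add_le_add hbdeg hgdeg
      _ = n * (d + 1) := split_eq n d hn
  have hbrefl : Polynomial.reflect (d + 1) b = b := by
    ext i
    rw [Polynomial.coeff_reflect]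
    by_cases h : i ≤ d + 1
    · rw [Polynomial.revAt_le h, ← hbsym i h]
    · rw [Polynomial.revAt_eq_self_of_lt (by omega)]
  have hprefl : Polynomial.reflect (n * (d + 1)) p = p := by
    rw [hp, ← split_eq n d hn, Polynomial.reflect_mul b _ hbdeg hgdeg, hbrefl,
      geomPoly_pow_reflect n hn]
  have hsym : ∀ i ≤ n * (d + 1), p.coeff i = p.coeff (n * (d + 1) - i) := by
    intro i hi
    conv_lhs => rw [← hprefl]
    rw [Polynomial.coeff_reflect, Polynomial.revAt_le hi]
  constructor
  · rw [Polynomial.natDegree_le_iff_coeff_eq_zero]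
    intro N hN
    rw [Eop_coeff n hn]
    apply Polynomial.coeff_eq_zero_of_natDegree_lt
    calc p.natDegree ≤ n * (d + 1) := hpdeg
      _ < n * N := (Nat.mul_lt_mul_left hn).mpr hN
  · intro i hi
    rw [Eop_coeff n hn, Eop_coeff n hn]
    have h1 : n * i ≤ n * (d + 1) := Nat.mul_le_mul_left n hi
    rw [hsym (n * i) h1, Nat.mul_sub]
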